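/- Chetayev's instability theorem: Let U ⊆ ℝⁿ be open containing 0, f : U → ℝⁿ a C¹ vector field with f(0) = 0, Ω ⊆ U open, and V : U → ℝ a C¹ function such that (i) 0 ∈ ∂Ω, (ii) V > 0 on Ω, (iii) V = 0 on ∂Ω ∩ U, and (iv) ∇V · f > 0 on Ω. Then the equilibrium 0 of ż = f(z) is unstable: there exists ε₀ > 0 such that for every δ > 0 there is an initial condition z₀ with ‖z₀‖ < δ whose forward solution leaves the ball of radius ε₀ in finite time (or ceases to exist). -/

import Mathlib

/-- **Chetayev's instability theorem.** Let `U ⊆ ℝⁿ` be open with `0 ∈ U`,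
`f : U → ℝⁿ` a `C¹` vector field with `f 0 = 0`, `Om ⊆ U` open, and
`V : U → ℝ` a `C¹` function with (i) `0 ∈ ∂Om`, (ii) `V > 0` on `Om`,
(iii) `V = 0` on `∂Om ∩ U`, (iv) `∇V · f > 0` on `Om`. Then the equilibrium
`0` is unstable: there is `ε₀ > 0` such that for every `δ > 0` there is an
initial condition `z₀` with `‖z₀‖ < δ` such that every forward solution
starting at `z₀` that stays in `U` for all `t ≥ 0` leaves the ball of radius
`ε₀` (so it leaves in finite time or ceases to exist in `U`). -/
theorem stmt17 {n : ℕ} (U : Set (EuclideanSpace ℝ (Fin n))) (hU : IsOpen U)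
    (h0U : (0 : EuclideanSpace ℝ (Fin n)) ∈ U)
    (f : EuclideanSpace ℝ (Fin n) → EuclideanSpace ℝ (Fin n))
    (hf : ContDiffOn ℝ 1 f U) (hf0 : f 0 = 0)
    (Om : Set (EuclideanSpace ℝ (Fin n))) (hOm : IsOpen Om) (hOmU : Om ⊆ U)
    (V : EuclideanSpace ℝ (Fin n) → ℝ) (hV : ContDiffOn ℝ 1 V U)
    (h1 : (0 : EuclideanSpace ℝ (Fin n)) ∈ frontier Om)
    (h2 : ∀ z ∈ Om, 0 < V z)
    (h3 : ∀ z ∈ frontier Om, z ∈ U → V z = 0)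
    (h4 : ∀ z ∈ Om, 0 < fderiv ℝ V z (f z)) :
    ∃ ε₀ > 0, ∀ δ > 0, ∃ z₀ : EuclideanSpace ℝ (Fin n), ‖z₀‖ < δ ∧
      ∀ x : ℝ → EuclideanSpace ℝ (Fin n), x 0 = z₀ →
        (∀ t ∈ Set.Ici (0 : ℝ), x t ∈ U ∧ HasDerivAt x (f (x t)) t) →
        ∃ t ≥ (0 : ℝ), ε₀ ≤ ‖x t‖ := by
  classical
  -- choose ε₀ = r with closedBall 0 r ⊆ U
  obtain ⟨r, hr0, hrU⟩ : ∃ r > 0, Metric.closedBall (0 : EuclideanSpace ℝ (Fin n)) r ⊆ U := by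
    rcases Metric.isOpen_iff.1 hU 0 h0U with ⟨s, hs, hball⟩
    exact ⟨s / 2, by positivity,
      (Metric.closedBall_subset_ball (by linarith)).trans hball⟩
  refine ⟨r, hr0, fun δ hδ => ?_⟩
  -- pick z₀ ∈ Om with ‖z₀‖ < min δ r
  obtain ⟨z₀, hz₀Om, hz₀d⟩ : ∃ z₀ ∈ Om, dist 0 z₀ < min δ r := by
    rcases Metric.mem_closure_iff.1 h1.1 (min δ r) (lt_min hδ hr0) with ⟨z, hz, hd⟩
    exact ⟨z, hz, hd⟩
  rw [dist_comm, dist_zero_right] at hz₀d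
  have hz₀δ : ‖z₀‖ < δ := hz₀d.trans_le (min_le_left _ _)
  have hz₀r : ‖z₀‖ < r := hz₀d.trans_le (min_le_right _ _)
  refine ⟨z₀, hz₀δ, fun x hx0 hsol => ?_⟩
  by_contra hcon
  push_neg at hcon
  have hxU : ∀ t, 0 ≤ t → x t ∈ U := fun t ht => (hsol t ht).1
  have hxd : ∀ t, 0 ≤ t → HasDerivAt x (f (x t)) t := fun t ht => (hsol t ht).2
  have hVd : ∀ z ∈ U, HasFDerivAt V (fderiv ℝ V z) z := fun z hz =>
    ((hV.differentiableOn one_ne_zero).differentiableAt (hU.mem_nhds hz)).hasFDerivAt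
  set D : EuclideanSpace ℝ (Fin n) → ℝ := fun z => fderiv ℝ V z (f z) with hD
  set g : ℝ → ℝ := fun t => V (x t) with hg
  have hgd : ∀ t, 0 ≤ t → HasDerivAt g (D (x t)) t := fun t ht =>
    (hVd _ (hxU t ht)).comp_hasDerivAt t (hxd t ht)
  have hgderiv : ∀ t, 0 ≤ t → deriv g t = D (x t) := fun t ht => (hgd t ht).deriv
  have hgcont : ContinuousOn g (Set.Ici (0 : ℝ)) := fun t ht =>
    ((hgd t ht).continuousAt).continuousWithinAt
  have hxcont : ∀ t, 0 ≤ t → ContinuousAt x t := fun t ht => (hxd t ht).continuousAt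
  -- Claim A : the solution stays in Om for all t ≥ 0
  have claimA : ∀ t, 0 ≤ t → x t ∈ Om := by
    by_contra hA
    push_neg at hA
    set S : Set ℝ := {t | 0 ≤ t ∧ x t ∉ Om} with hS
    have hSne : S.Nonempty := by
      obtain ⟨t, ht0, htOm⟩ := hA
      exact ⟨t, ht0, htOm⟩
    have hSsub : S = Set.Ici (0 : ℝ) ∩ x ⁻¹' Omᶜ := by
      ext t; simp [hS, Set.mem_Ici, and_comm]
    have hScl : IsClosed S := by
      rw [hSsub]
      exact ContinuousOn.preimage_isClosed_of_isClosed
        (fun t ht => (hxcont t ht).continuousWithinAt) isClosed_Ici hOm.isClosed_compl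
    have hSbdd : BddBelow S := ⟨0, fun t ht => ht.1⟩
    set T := sInf S with hT
    have hTS : T ∈ S := hScl.csInf_mem hSne hSbdd
    have hT0 : 0 ≤ T := hTS.1
    have hTpos : 0 < T := by
      rcases hT0.lt_or_eq with h | h
      · exact h
      · exfalso; apply hTS.2; rw [← h, hx0]; exact hz₀Om
    have hbefore : ∀ t, 0 ≤ t → t < T → x t ∈ Om := by
      intro t ht0 htT
      by_contra htOm
      exact absurd (csInf_le hSbdd ⟨ht0, htOm⟩) (not_le.2 htT)
    -- g is strictly increasing on [0, T]
    have hmono : StrictMonoOn g (Set.Icc 0 T) := by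
      apply strictMonoOn_of_deriv_pos (convex_Icc 0 T)
        (hgcont.mono (fun t ht => ht.1))
      intro t ht
      rw [interior_Icc] at ht
      rw [hgderiv t ht.1.le]
      exact h4 _ (hbefore t ht.1.le ht.2)
    have hgT : g 0 < g T := hmono ⟨le_rfl, hT0⟩ ⟨hT0, le_rfl⟩ hTpos
    have hg0 : 0 < g 0 := by
      rw [hg]; simp only [hx0]; exact h2 _ hz₀Om
    -- x T ∈ frontier Om
    have hxTcl : x T ∈ closure Om := by
      have h1' : ContinuousWithinAt x (Set.Ico 0 T) T := (hxcont T hT0).continuousWithinAt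
      have h2' : T ∈ closure (Set.Ico 0 T) := by
        rw [closure_Ico hTpos.ne]; exact ⟨hT0, le_rfl⟩
      have h3' : x T ∈ closure (x '' Set.Ico 0 T) := h1'.mem_closure_image h2'
      refine closure_mono ?_ h3'
      rintro y ⟨t, ⟨ht0, htT⟩, rfl⟩
      exact hbefore t ht0 htT
    have hxTfr : x T ∈ frontier Om := by
      rw [frontier, hOm.interior_eq]
      exact ⟨hxTcl, hTS.2⟩
    have : V (x T) = 0 := h3 _ hxTfr (hxU T hT0)
    rw [show V (x T) = g T from rfl] at this
    linarith
  -- c := V z₀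
  set c : ℝ := V z₀ with hc
  have hcpos : 0 < c := h2 _ hz₀Om
  -- g is monotone on Ici 0
  have hmono : MonotoneOn g (Set.Ici (0 : ℝ)) := by
    apply monotoneOn_of_deriv_nonneg (convex_Ici 0) hgcont
    · intro t ht
      rw [interior_Ici] at ht
      exact ((hgd t ht.le).differentiableAt).differentiableWithinAt
    · intro t ht
      rw [interior_Ici] at ht
      rw [hgderiv t ht.le]
      exact (h4 _ (claimA t ht.le)).le
  have hgec : ∀ t, 0 ≤ t → c ≤ g t := by
    intro t ht
    have := hmono (Set.self_mem_Ici) ht ht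
    rw [hg] at this ⊢
    simpa [hx0] using this
  -- compact set K
  set K : Set (EuclideanSpace ℝ (Fin n)) :=
    (Metric.closedBall 0 r ∩ closure Om) ∩ V ⁻¹' Set.Ici c with hK
  have hKU : K ⊆ U := fun z hz => hrU hz.1.1
  have hKOm : K ⊆ Om := by
    rintro z ⟨⟨hzb, hzcl⟩, hzV⟩
    by_contra hzOm
    have hzfr : z ∈ frontier Om := by
      rw [frontier, hOm.interior_eq]; exact ⟨hzcl, hzOm⟩
    have := h3 z hzfr (hrU hzb)
    have : (c : ℝ) ≤ 0 := by rw [← this]; exact hzV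
    linarith
  have hKcl : IsClosed K := by
    apply ContinuousOn.preimage_isClosed_of_isClosed
      ((hV.continuousOn).mono (fun z hz => hrU hz.1))
      (Metric.isClosed_closedBall.inter isClosed_closure) isClosed_Ici
  have hKcomp : IsCompact K :=
    (isCompact_closedBall _ _).of_isClosed_subset hKcl (fun z hz => hz.1.1)
  have hxK : ∀ t, 0 ≤ t → x t ∈ K := by
    intro t ht
    refine ⟨⟨?_, subset_closure (claimA t ht)⟩, hgec t ht⟩
    rw [Metric.mem_closedBall, dist_zero_right]
    exact (hcon t ht).le
  have hKne : K.Nonempty := ⟨x 0, hxK 0 le_rfl⟩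
  -- D is continuous on U, positive min on K
  have hDcont : ContinuousOn D U :=
    (hV.continuousOn_fderiv_of_isOpen hU le_rfl).clm_apply hf.continuousOn
  obtain ⟨zm, hzmK, hzmmin⟩ := hKcomp.exists_isMinOn hKne (hDcont.mono hKU)
  set a : ℝ := D zm with ha
  have hapos : 0 < a := h4 _ (hKOm hzmK)
  have hamin : ∀ z ∈ K, a ≤ D z := fun z hz => hzmmin hz
  -- max of V on K
  obtain ⟨zM, hzMK, hzMmax⟩ := hKcomp.exists_isMaxOn hKne (hV.continuousOn.mono hKU)
  set M : ℝ := V zM with hM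
  have hVmax : ∀ z ∈ K, V z ≤ M := fun z hz => hzMmax hz
  have hcM : c ≤ M := by
    have : z₀ ∈ K := by rw [← hx0]; exact hxK 0 le_rfl
    exact hVmax _ this
  -- linear lower bound: g t ≥ c + a * t
  have hlin : ∀ t, 0 ≤ t → c + a * t ≤ g t := by
    intro t ht
    have hmono2 : MonotoneOn (fun s => g s - a * s) (Set.Ici (0 : ℝ)) := by
      apply monotoneOn_of_deriv_nonneg (convex_Ici 0)
      · exact hgcont.sub (continuousOn_const.mul continuousOn_id)
      · intro s hs
        rw [interior_Ici] at hs
        exact (((hgd s hs.le).sub ((hasDerivAt_id s).const_mul a)).differentiableAt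
          ).differentiableWithinAt
      · intro s hs
        rw [interior_Ici] at hs
        have hds : HasDerivAt (fun s => g s - a * s) (D (x s) - a) s := by
          have := (hgd s hs.le).sub ((hasDerivAt_id s).const_mul a); rw [mul_one] at this; exact this
        rw [hds.deriv]
        have := hamin _ (hxK s hs.le)
        linarith
    have h0 := hmono2 Set.self_mem_Ici ht ht
    simp only [mul_zero, sub_zero] at h0
    have hgz : g 0 = c := by simp only [hg]; rw [hx0]
    linarith [h0]
  -- contradiction at large t
  have hfin : ∀ t, 0 ≤ t → a * t ≤ M - c := by
    intro t ht
    have h1' := hlin t ht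
    have h2' := hVmax _ (hxK t ht)
    rw [show V (x t) = g t from rfl] at h2'
    linarith
  have hta : 0 ≤ (M - c) / a + 1 := by
    have : 0 ≤ (M - c) / a := div_nonneg (by linarith) hapos.le
    linarith
  have hbig := hfin _ hta
  have hmc : a * ((M - c) / a + 1) = (M - c) + a := by
    field_simp
  linarith
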